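/- For n ≥ 0, the number of binary Burge matrices of size n equals the number of pairs (u,v) with u ∈ WI[n], v ∈ Cay[n] and Des(u) ⊆ Des∘(v); and the number of Burge matrices of size n whose every column sums to 1 equals the number of pairs (u,v) with u ∈ WI[n], v a permutation of {1,…,n}, and Des(u) ⊆ Des(v). -/

import Mathlib

namespace CayPaper

/-- A word of length `n` (1-indexed): it vanishes outside `{1,…,n}`. -/
def IsWord (n : ℕ) (v : ℕ → ℕ) : Prop := ∀ i, i ∉ Set.Icc 1 n → v i = 0

/-- A Cayley permutation of length `n`: a word on `{1,…,n}` whose image is `{1,…,k}`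
for some `k ≤ n`. -/
def IsCayley (n : ℕ) (v : ℕ → ℕ) : Prop :=
  IsWord n v ∧ ∃ k, v '' Set.Icc 1 n = Set.Icc 1 k

/-- A weakly increasing Cayley permutation of length `n`. -/
def IsWI (n : ℕ) (v : ℕ → ℕ) : Prop :=
  IsCayley n v ∧ MonotoneOn v (Set.Icc 1 n)

/-- A permutation of `{1,…,n}`, encoded as a word. -/
def IsPermWord (n : ℕ) (v : ℕ → ℕ) : Prop :=
  IsWord n v ∧ Set.BijOn v (Set.Icc 1 n) (Set.Icc 1 n)

/-- The weak descent set `Des(v) = { i ∈ {1,…,n−1} : v(i) ≥ v(i+1) }`. -/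
def desSet (n : ℕ) (v : ℕ → ℕ) : Finset ℕ :=
  (Finset.Icc 1 (n - 1)).filter fun i => v (i + 1) ≤ v i

/-- The strict descent set `Des∘(v) = { i : v(i) > v(i+1) }`. -/
def sdesSet (n : ℕ) (v : ℕ → ℕ) : Finset ℕ :=
  (Finset.Icc 1 (n - 1)).filter fun i => v (i + 1) < v i

/-- The weak ascent set `Asc(v) = { i : v(i) ≤ v(i+1) }`. -/
def ascSet (n : ℕ) (v : ℕ → ℕ) : Finset ℕ :=
  (Finset.Icc 1 (n - 1)).filter fun i => v i ≤ v (i + 1)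

/-- The strict ascent set `Asc∘(v) = { i : v(i) < v(i+1) }`. -/
def sascSet (n : ℕ) (v : ℕ → ℕ) : Finset ℕ :=
  (Finset.Icc 1 (n - 1)).filter fun i => v i < v (i + 1)

def des (n : ℕ) (v : ℕ → ℕ) : ℕ := (desSet n v).card
def sdes (n : ℕ) (v : ℕ → ℕ) : ℕ := (sdesSet n v).card
def asc (n : ℕ) (v : ℕ → ℕ) : ℕ := (ascSet n v).card
def sasc (n : ℕ) (v : ℕ → ℕ) : ℕ := (sascSet n v).card

/-- The maximum value of a word. -/
def wmax (n : ℕ) (v : ℕ → ℕ) : ℕ := (Finset.Icc 1 n).sup v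

/-- Reverse: `v^r(i) = v(n+1−i)`. -/
def wrev (n : ℕ) (v : ℕ → ℕ) : ℕ → ℕ := fun i =>
  if 1 ≤ i ∧ i ≤ n then v (n + 1 - i) else 0

/-- Complement: `v^c(i) = max(v)+1−v(i)`. -/
def wcomp (n : ℕ) (v : ℕ → ℕ) : ℕ → ℕ := fun i =>
  if 1 ≤ i ∧ i ≤ n then wmax n v + 1 - v i else 0

/-- The word `(σ(1), …, σ(n))` (1-indexed) of a permutation `σ` of `Fin n`. -/
def permWord (n : ℕ) (σ : Equiv.Perm (Fin n)) : ℕ → ℕ := fun i =>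
  if h : 1 ≤ i ∧ i ≤ n then ((σ ⟨i - 1, by omega⟩ : Fin n) : ℕ) + 1 else 0

/-- The conjugate of `u`: the unique weakly increasing Cayley permutation of
length `n` whose descent set is `{1,…,n−1} \ Des(u)`. -/
noncomputable def conjWI (n : ℕ) (u : ℕ → ℕ) : ℕ → ℕ :=
  haveI := Classical.dec (∃ w, IsWI n w ∧ desSet n w = Finset.Icc 1 (n - 1) \ desSet n u)
  if h : ∃ w, IsWI n w ∧ desSet n w = Finset.Icc 1 (n - 1) \ desSet n u
    then h.choose else fun _ => 0

/-- A Burge matrix: every row and every column contains a nonzero entry. -/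
def IsBurge {p q : ℕ} (M : Matrix (Fin p) (Fin q) ℕ) : Prop :=
  (∀ i, ∃ j, M i j ≠ 0) ∧ (∀ j, ∃ i, M i j ≠ 0)

/-- The size of a matrix with natural entries: the sum of its entries. -/
def matSize {p q : ℕ} (M : Matrix (Fin p) (Fin q) ℕ) : ℕ := ∑ i, ∑ j, M i j

/-- Burge matrices of size `n` (of all dimensions). -/
def BurgeMatrices (n : ℕ) : Set (Σ p : ℕ, Σ q : ℕ, Matrix (Fin p) (Fin q) ℕ) :=
  {M | IsBurge M.2.2 ∧ matSize M.2.2 = n}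

/-- Binary Burge matrices of size `n`. -/
def BinaryBurgeMatrices (n : ℕ) : Set (Σ p : ℕ, Σ q : ℕ, Matrix (Fin p) (Fin q) ℕ) :=
  {M | M ∈ BurgeMatrices n ∧ ∀ i j, M.2.2 i j ≤ 1}

/-- Burge matrices of size `n` whose every column sums to `1`. -/
def ColSumOneBurgeMatrices (n : ℕ) : Set (Σ p : ℕ, Σ q : ℕ, Matrix (Fin p) (Fin q) ℕ) :=
  {M | M ∈ BurgeMatrices n ∧ ∀ j, ∑ i, M.2.2 i j = 1}

/-- Burge words: pairs `(u,v) ∈ WI[n] × Cay[n]` with `Des(u) ⊆ Des(v)`. -/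
def BurPairs (n : ℕ) : Set ((ℕ → ℕ) × (ℕ → ℕ)) :=
  {p | IsWI n p.1 ∧ IsCayley n p.2 ∧ desSet n p.1 ⊆ desSet n p.2}

/-- Pairs `(u,v) ∈ WI[n] × Cay[n]` with `Des(u) ⊆ Des∘(v)`. -/
def BBurPairs (n : ℕ) : Set ((ℕ → ℕ) × (ℕ → ℕ)) :=
  {p | IsWI n p.1 ∧ IsCayley n p.2 ∧ desSet n p.1 ⊆ sdesSet n p.2}

/-- Pairs `(u,v) ∈ WI[n] × S_n` with `Des(u) ⊆ Des(v)`. -/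
def PBurPairs (n : ℕ) : Set ((ℕ → ℕ) × (ℕ → ℕ)) :=
  {p | IsWI n p.1 ∧ IsPermWord n p.2 ∧ desSet n p.1 ⊆ desSet n p.2}

/-- `Ω[n]`: pairs `(u,v) ∈ WI[n] × Cay[n]` with `Des(u) ⊇ Des(v)`. -/
def OmegaPairs (n : ℕ) : Set ((ℕ → ℕ) × (ℕ → ℕ)) :=
  {p | IsWI n p.1 ∧ IsCayley n p.2 ∧ desSet n p.2 ⊆ desSet n p.1}

/-- `v` lists the positions `1,…,n` in the order obtained by sorting the columns
`(x_i, i)` so that first components are weakly increasing, ties broken by strictly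
decreasing second components.  For a permutation word `v` this says exactly that
`v = Γ(id, x)`, the bottom row of the Burge transpose of `(id, x)`. -/
def sortsColumns (n : ℕ) (x v : ℕ → ℕ) : Prop :=
  ∀ i ∈ Finset.Icc 1 (n - 1),
    x (v i) < x (v (i + 1)) ∨ (x (v i) = x (v (i + 1)) ∧ v (i + 1) < v i)

/-- The Fishburn basis of a permutation word `v`:
`basis(v) = { x ∈ Cay[n] : Γ(id, x) = v }`. -/
def fishburnBasis (n : ℕ) (v : ℕ → ℕ) : Set (ℕ → ℕ) :=
  {x | IsCayley n x ∧ sortsColumns n x v}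

/-- Stanley's `v`-compatibility condition:
`x(v(1)) ≤ ⋯ ≤ x(v(n))` with strict inequality at every ascent of `v`. -/
def VCompatible (n : ℕ) (v x : ℕ → ℕ) : Prop :=
  (∀ i ∈ Finset.Icc 1 (n - 1), x (v i) ≤ x (v (i + 1))) ∧
    ∀ i ∈ Finset.Icc 1 (n - 1), v i < v (i + 1) → x (v i) < x (v (i + 1))

/-- A map `{1,…,n} → {1,…,m}`, encoded as a word. -/
def IsMapTo (n m : ℕ) (x : ℕ → ℕ) : Prop :=
  IsWord n x ∧ ∀ i ∈ Set.Icc 1 n, x i ∈ Set.Icc 1 m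

/-- Weakly increasing maps `{1,…,n} → {1,…,m}`. -/
def WIgen (n m : ℕ) : Set (ℕ → ℕ) :=
  {u | IsMapTo n m u ∧ MonotoneOn u (Set.Icc 1 n)}


/-! ### Auxiliary development -/

/-- Extension of a matrix to 1-indexed ℕ × ℕ coordinates. -/
def extM {p q : ℕ} (M : Matrix (Fin p) (Fin q) ℕ) (i j : ℕ) : ℕ :=
  if h : 1 ≤ i ∧ i ≤ p ∧ 1 ≤ j ∧ j ≤ q then M ⟨i-1, by omega⟩ ⟨j-1, by omega⟩ else 0

lemma extM_apply {p q : ℕ} (M : Matrix (Fin p) (Fin q) ℕ) (i : Fin p) (j : Fin q) :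
    extM M ((i : ℕ)+1) ((j : ℕ)+1) = M i j := by
  have h : 1 ≤ (i:ℕ)+1 ∧ (i:ℕ)+1 ≤ p ∧ 1 ≤ (j:ℕ)+1 ∧ (j:ℕ)+1 ≤ q := by
    refine ⟨by omega, by omega, by omega, by omega⟩
  rw [extM, dif_pos h]
  congr 1 <;> · apply Fin.ext; simp

/-- Fibers of the pair map. -/
def fib (n : ℕ) (u v : ℕ → ℕ) (i j : ℕ) : Finset ℕ :=
  (Finset.Icc 1 n).filter fun t => u t = i ∧ v t = j

def toMat (n : ℕ) (u v : ℕ → ℕ) : Matrix (Fin (wmax n u)) (Fin (wmax n v)) ℕ :=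
  fun i j => (fib n u v ((i:ℕ)+1) ((j:ℕ)+1)).card

def FF (n : ℕ) (x : (ℕ → ℕ) × (ℕ → ℕ)) : Σ p : ℕ, Σ q : ℕ, Matrix (Fin p) (Fin q) ℕ :=
  ⟨wmax n x.1, wmax n x.2, toMat n x.1 x.2⟩

lemma sigma_eq_extM {p q p' q' : ℕ} {M : Matrix (Fin p) (Fin q) ℕ}
    {M' : Matrix (Fin p') (Fin q') ℕ}
    (h : (⟨p, ⟨q, M⟩⟩ : Σ a : ℕ, Σ b : ℕ, Matrix (Fin a) (Fin b) ℕ) = ⟨p', ⟨q', M'⟩⟩) :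
    extM M = extM M' := by
  obtain ⟨rfl, h2⟩ := Sigma.mk.inj_iff.mp h
  obtain ⟨rfl, h3⟩ := Sigma.mk.inj_iff.mp (eq_of_heq h2)
  rw [eq_of_heq h3]

lemma sigma_eq_of_extM {p q p' q' : ℕ} {M : Matrix (Fin p) (Fin q) ℕ}
    {M' : Matrix (Fin p') (Fin q') ℕ} (hp : p = p') (hq : q = q')
    (h : extM M = extM M') :
    (⟨p, ⟨q, M⟩⟩ : Σ a : ℕ, Σ b : ℕ, Matrix (Fin a) (Fin b) ℕ) = ⟨p', ⟨q', M'⟩⟩ := by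
  subst hp; subst hq
  have : M = M' := by
    funext i j
    rw [← extM_apply M i j, ← extM_apply M' i j, h]
  rw [this]

lemma le_wmax {n : ℕ} (u : ℕ → ℕ) {t : ℕ} (ht : t ∈ Finset.Icc 1 n) : u t ≤ wmax n u :=
  Finset.le_sup ht

lemma wmax_eq {n k : ℕ} {u : ℕ → ℕ} (h : u '' Set.Icc 1 n = Set.Icc 1 k) (hn : 1 ≤ n) :
    wmax n u = k := by
  have hk1 : 1 ≤ k := by
    have h1 : u 1 ∈ Set.Icc 1 k := by
      rw [← h]; exact ⟨1, ⟨le_refl 1, hn⟩, rfl⟩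
    exact le_trans h1.1 h1.2
  apply le_antisymm
  · apply Finset.sup_le
    intro t ht
    rw [Finset.mem_Icc] at ht
    have : u t ∈ Set.Icc 1 k := by rw [← h]; exact ⟨t, ⟨ht.1, ht.2⟩, rfl⟩
    exact this.2
  · have : (k : ℕ) ∈ u '' Set.Icc 1 n := by rw [h]; exact ⟨hk1, le_refl k⟩
    obtain ⟨t, ht, hut⟩ := this
    calc k = u t := hut.symm
    _ ≤ wmax n u := le_wmax u (Finset.mem_Icc.mpr ⟨ht.1, ht.2⟩)

/-- On a block where `u` is constant, `v` is strictly decreasing. -/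
lemma blockStrictAnti {n : ℕ} {u v : ℕ → ℕ} (hu : MonotoneOn u (Set.Icc 1 n))
    (hd : desSet n u ⊆ sdesSet n v) :
    ∀ s t, 1 ≤ s → s < t → t ≤ n → u s = u t → v t < v s := by
  intro s t hs hst htn hust
  induction t, hst using Nat.le_induction with
  | base =>
    have h1 : s ∈ desSet n u := by
      rw [desSet, Finset.mem_filter, Finset.mem_Icc]
      exact ⟨⟨hs, by omega⟩, le_of_eq hust.symm⟩
    have := hd h1
    rw [sdesSet, Finset.mem_filter] at this
    exact this.2
  | succ t hst ih =>
    have htn' : t ≤ n := by omega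
    have hs' : s ∈ Set.Icc 1 n := ⟨hs, by omega⟩
    have ht' : t ∈ Set.Icc 1 n := ⟨by omega, htn'⟩
    have ht1' : t + 1 ∈ Set.Icc 1 n := ⟨by omega, htn⟩
    have h1 : u s ≤ u t := hu hs' ht' (by omega)
    have h2 : u t ≤ u (t+1) := hu ht' ht1' (by omega)
    have hust' : u s = u t := by omega
    have hv1 : v t < v s := ih htn' hust'
    have h3 : t ∈ desSet n u := by
      rw [desSet, Finset.mem_filter, Finset.mem_Icc]
      exact ⟨⟨by omega, by omega⟩, by omega⟩
    have := hd h3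
    rw [sdesSet, Finset.mem_filter] at this
    omega

/-- Uniqueness of strictly decreasing enumerations of a finite set. -/
lemma strictAntiOn_eq_of_image_eq :
    ∀ (S : Finset ℕ) (f g : ℕ → ℕ),
    (∀ a ∈ S, ∀ b ∈ S, a < b → f b < f a) →
    (∀ a ∈ S, ∀ b ∈ S, a < b → g b < g a) →
    S.image f = S.image g → ∀ a ∈ S, f a = g a := by
  intro S
  induction S using Finset.strongInduction with
  | _ S ih =>
    intro f g hf hg himg a ha
    have hne : S.Nonempty := ⟨a, ha⟩
    set m := S.max' hne with hm
    have hmS : m ∈ S := S.max'_mem hne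
    -- f m is the min of the image
    have himne : (S.image f).Nonempty := ⟨f m, Finset.mem_image_of_mem f hmS⟩
    have hfm : f m = (S.image f).min' himne := by
      apply le_antisymm
      · apply Finset.le_min'
        intro y hy
        obtain ⟨b, hb, rfl⟩ := Finset.mem_image.mp hy
        rcases lt_trichotomy b m with h | h | h
        · exact le_of_lt (hf b hb m hmS h)
        · subst h; rfl
        · exact absurd (S.le_max' b hb) (by omega)
      · exact Finset.min'_le _ _ (Finset.mem_image_of_mem f hmS)
    have himne' : (S.image g).Nonempty := ⟨g m, Finset.mem_image_of_mem g hmS⟩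
    have hgm : g m = (S.image g).min' himne' := by
      apply le_antisymm
      · apply Finset.le_min'
        intro y hy
        obtain ⟨b, hb, rfl⟩ := Finset.mem_image.mp hy
        rcases lt_trichotomy b m with h | h | h
        · exact le_of_lt (hg b hb m hmS h)
        · subst h; rfl
        · exact absurd (S.le_max' b hb) (by omega)
      · exact Finset.min'_le _ _ (Finset.mem_image_of_mem g hmS)
    have hfgm : f m = g m := by
      rw [hfm, hgm]; congr 1
    rcases eq_or_ne a m with rfl | hane
    · exact hfgm
    -- recurse on S.erase m
    have hSe : S.erase m ⊂ S := Finset.erase_ssubset hmS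
    have himg' : (S.erase m).image f = (S.erase m).image g := by
      have h1 : (S.erase m).image f = (S.image f).erase (f m) := by
        apply Finset.ext
        intro y
        simp only [Finset.mem_image, Finset.mem_erase]
        constructor
        · rintro ⟨b, hb, rfl⟩
          obtain ⟨hbm, hbS⟩ := hb
          have : b < m := lt_of_le_of_ne (S.le_max' b hbS) hbm
          exact ⟨ne_of_gt (hf b hbS m hmS this), b, hbS, rfl⟩
        · rintro ⟨hy, b, hbS, rfl⟩
          have hbm : b ≠ m := fun h => hy (by rw [h])
          exact ⟨b, ⟨hbm, hbS⟩, rfl⟩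
      have h2 : (S.erase m).image g = (S.image g).erase (g m) := by
        apply Finset.ext
        intro y
        simp only [Finset.mem_image, Finset.mem_erase]
        constructor
        · rintro ⟨b, hb, rfl⟩
          obtain ⟨hbm, hbS⟩ := hb
          have : b < m := lt_of_le_of_ne (S.le_max' b hbS) hbm
          exact ⟨ne_of_gt (hg b hbS m hmS this), b, hbS, rfl⟩
        · rintro ⟨hy, b, hbS, rfl⟩
          have hbm : b ≠ m := fun h => hy (by rw [h])
          exact ⟨b, ⟨hbm, hbS⟩, rfl⟩
      rw [h1, h2, himg, hfgm]
    have haS : a ∈ S.erase m := Finset.mem_erase.mpr ⟨hane, ha⟩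
    exact ih (S.erase m) hSe f g
      (fun x hx y hy h => hf x (Finset.mem_of_mem_erase hx) y (Finset.mem_of_mem_erase hy) h)
      (fun x hx y hy h => hg x (Finset.mem_of_mem_erase hx) y (Finset.mem_of_mem_erase hy) h)
      himg' a haS

lemma sum_fin_icc (P : ℕ) (g : ℕ → ℕ) :
    ∑ i : Fin P, g ((i : ℕ) + 1) = ∑ i ∈ Finset.Icc 1 P, g i := by
  rw [Fin.sum_univ_eq_sum_range (fun i => g (i + 1)) P, ← Finset.Ico_add_one_right_eq_Icc, Finset.sum_Ico_eq_sum_range]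
  simp [add_comm]

lemma rowsum_fib {n : ℕ} (u v : ℕ → ℕ) (i Q : ℕ)
    (hv : ∀ t ∈ Finset.Icc 1 n, v t ∈ Finset.Icc 1 Q) :
    ∑ j ∈ Finset.Icc 1 Q, (fib n u v i j).card
      = ((Finset.Icc 1 n).filter fun t => u t = i).card := by
  rw [Finset.card_eq_sum_card_fiberwise
    (f := v) (t := Finset.Icc 1 Q)
    (fun t ht => hv t (Finset.mem_of_mem_filter t ht))]
  exact Finset.sum_congr rfl fun j _ => by rw [fib, Finset.filter_filter]

lemma colsum_fib {n : ℕ} (u v : ℕ → ℕ) (j P : ℕ)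
    (hu : ∀ t ∈ Finset.Icc 1 n, u t ∈ Finset.Icc 1 P) :
    ∑ i ∈ Finset.Icc 1 P, (fib n u v i j).card
      = ((Finset.Icc 1 n).filter fun t => v t = j).card := by
  rw [Finset.card_eq_sum_card_fiberwise
    (f := u) (t := Finset.Icc 1 P)
    (fun t ht => hu t (Finset.mem_of_mem_filter t ht))]
  apply Finset.sum_congr rfl
  intro i _
  congr 1
  rw [fib, Finset.filter_filter]
  ext t
  simp only [Finset.mem_filter]
  tauto

lemma size_fib {n : ℕ} (u v : ℕ → ℕ) (P Q : ℕ)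
    (hu : ∀ t ∈ Finset.Icc 1 n, u t ∈ Finset.Icc 1 P)
    (hv : ∀ t ∈ Finset.Icc 1 n, v t ∈ Finset.Icc 1 Q) :
    ∑ i ∈ Finset.Icc 1 P, ∑ j ∈ Finset.Icc 1 Q, (fib n u v i j).card = n := by
  have h0 : ∀ i ∈ Finset.Icc 1 P, ∑ j ∈ Finset.Icc 1 Q, (fib n u v i j).card
      = ((Finset.Icc 1 n).filter fun t => u t = i).card :=
    fun i _ => rowsum_fib u v i Q hv
  rw [Finset.sum_congr rfl h0,
    ← Finset.card_eq_sum_card_fiberwise (f := u) (t := Finset.Icc 1 P) hu,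
    Nat.card_Icc]
  omega

/-- A down-closed subset of `Icc 1 n` is an initial interval. -/
lemma downset_eq_Icc {n : ℕ} (S : Finset ℕ) (hsub : S ⊆ Finset.Icc 1 n)
    (hdown : ∀ t ∈ S, ∀ s, 1 ≤ s → s ≤ t → s ∈ S) : S = Finset.Icc 1 S.card := by
  rcases S.eq_empty_or_nonempty with rfl | hne
  · simp
  have hmem := S.max'_mem hne
  set m := S.max' hne with hmdef
  have hS : S = Finset.Icc 1 m := by
    ext t
    constructor
    · intro ht
      rw [Finset.mem_Icc]
      exact ⟨(Finset.mem_Icc.mp (hsub ht)).1, S.le_max' t ht⟩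
    · intro ht
      rw [Finset.mem_Icc] at ht
      exact hdown _ hmem t ht.1 ht.2
  have hcard : S.card = m := by rw [hS, Nat.card_Icc]; omega
  rw [hcard]
  exact hS

lemma mono_le_iff {n i : ℕ} {u : ℕ → ℕ} (hu : MonotoneOn u (Set.Icc 1 n)) :
    ∀ t ∈ Finset.Icc 1 n,
      (u t ≤ i ↔ t ≤ ((Finset.Icc 1 n).filter fun s => u s ≤ i).card) := by
  set S := (Finset.Icc 1 n).filter fun s => u s ≤ i with hSdef
  have hsub : S ⊆ Finset.Icc 1 n := Finset.filter_subset _ _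
  have hdown : ∀ t ∈ S, ∀ s, 1 ≤ s → s ≤ t → s ∈ S := by
    intro t ht s hs1 hst
    rw [hSdef, Finset.mem_filter] at ht ⊢
    have htn := Finset.mem_Icc.mp ht.1
    have hsn : s ∈ Finset.Icc 1 n := Finset.mem_Icc.mpr ⟨hs1, by omega⟩
    refine ⟨hsn, le_trans (hu ⟨hs1, by omega⟩ ⟨htn.1, htn.2⟩ hst) ht.2⟩
  have hIcc := downset_eq_Icc S hsub hdown
  intro t htn
  constructor
  · intro h
    have : t ∈ S := Finset.mem_filter.mpr ⟨htn, h⟩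
    rw [hIcc, Finset.mem_Icc] at this
    exact this.2
  · intro h
    have h1 := (Finset.mem_Icc.mp htn).1
    have : t ∈ S := by rw [hIcc, Finset.mem_Icc]; exact ⟨h1, h⟩
    exact (Finset.mem_filter.mp this).2

lemma card_le_eq_sum {n : ℕ} (u : ℕ → ℕ) (i : ℕ) :
    ((Finset.Icc 1 n).filter fun s => u s ≤ i).card
      = ∑ b ∈ Finset.range (i+1), ((Finset.Icc 1 n).filter fun s => u s = b).card := by
  rw [Finset.card_eq_sum_card_fiberwise (f := u) (t := Finset.range (i+1))
    (by intro t ht; rw [Finset.mem_coe, Finset.mem_range]; have := (Finset.mem_filter.mp (Finset.mem_coe.mp ht)).2; omega)]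
  refine Finset.sum_congr rfl fun b hb => ?_
  rw [Finset.mem_range] at hb
  congr 1
  rw [Finset.filter_filter]
  ext t
  simp only [Finset.mem_filter]
  constructor
  · rintro ⟨h1, _, h3⟩; exact ⟨h1, h3⟩
  · rintro ⟨h1, h3⟩; exact ⟨h1, by omega, h3⟩

/-- Two monotone words with the same value multiplicities agree. -/
lemma mono_eq_of_counts {n : ℕ} {u u' : ℕ → ℕ}
    (hu : MonotoneOn u (Set.Icc 1 n)) (hu' : MonotoneOn u' (Set.Icc 1 n))
    (hc : ∀ i, ((Finset.Icc 1 n).filter fun s => u s = i).card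
             = ((Finset.Icc 1 n).filter fun s => u' s = i).card) :
    ∀ t ∈ Finset.Icc 1 n, u t = u' t := by
  have hle : ∀ i, ((Finset.Icc 1 n).filter fun s => u s ≤ i).card
      = ((Finset.Icc 1 n).filter fun s => u' s ≤ i).card := by
    intro i
    rw [card_le_eq_sum, card_le_eq_sum]
    exact Finset.sum_congr rfl fun b _ => hc b
  intro t htn
  have hA : u t ≤ u' t := by
    rw [mono_le_iff hu t htn, hle]
    exact (mono_le_iff hu' t htn).mp (le_refl _)
  have hB : u' t ≤ u t := by
    rw [mono_le_iff hu' t htn, ← hle]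
    exact (mono_le_iff hu t htn).mp (le_refl _)
  omega

lemma img_mem {n k : ℕ} {u : ℕ → ℕ} (h : u '' Set.Icc 1 n = Set.Icc 1 k) :
    (∀ t ∈ Finset.Icc 1 n, u t ∈ Finset.Icc 1 k)
    ∧ (∀ i ∈ Finset.Icc 1 k, ∃ t ∈ Finset.Icc 1 n, u t = i) := by
  constructor
  · intro t ht
    rw [Finset.mem_Icc] at ht ⊢
    have : u t ∈ Set.Icc 1 k := by rw [← h]; exact ⟨t, ⟨ht.1, ht.2⟩, rfl⟩
    exact ⟨this.1, this.2⟩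
  · intro i hi
    rw [Finset.mem_Icc] at hi
    have : i ∈ u '' Set.Icc 1 n := by rw [h]; exact ⟨hi.1, hi.2⟩
    obtain ⟨t, ht, rfl⟩ := this
    exact ⟨t, Finset.mem_Icc.mpr ⟨ht.1, ht.2⟩, rfl⟩

lemma fib_card_le_one {n : ℕ} {u v : ℕ → ℕ} (hu : MonotoneOn u (Set.Icc 1 n))
    (hd : desSet n u ⊆ sdesSet n v) (i j : ℕ) : (fib n u v i j).card ≤ 1 := by
  rw [Finset.card_le_one]
  intro s hs t ht
  rw [fib, Finset.mem_filter, Finset.mem_Icc] at hs ht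
  by_contra hne
  rcases lt_or_gt_of_ne hne with hlt | hlt
  · have := blockStrictAnti hu hd s t hs.1.1 hlt ht.1.2 (by omega)
    omega
  · have := blockStrictAnti hu hd t s ht.1.1 hlt hs.1.2 (by omega)
    omega

lemma extM_toMat {n : ℕ} {u v : ℕ → ℕ}
    (hu_img : u '' Set.Icc 1 n = Set.Icc 1 (wmax n u))
    (hv_img : v '' Set.Icc 1 n = Set.Icc 1 (wmax n v)) (i j : ℕ) :
    extM (toMat n u v) i j = (fib n u v i j).card := by
  rw [extM]
  split_ifs with h
  · show (fib n u v (i - 1 + 1) (j - 1 + 1)).card = (fib n u v i j).card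
    have h1 : i - 1 + 1 = i := by omega
    have h2 : j - 1 + 1 = j := by omega
    rw [h1, h2]
  · symm
    rw [Finset.card_eq_zero, fib, Finset.filter_eq_empty_iff]
    intro t ht
    rintro ⟨hut, hvt⟩
    have h1 := (img_mem hu_img).1 t ht
    have h2 := (img_mem hv_img).1 t ht
    rw [Finset.mem_Icc] at h1 h2
    omega

lemma matSize_toMat {n : ℕ} {u v : ℕ → ℕ}
    (hu_img : u '' Set.Icc 1 n = Set.Icc 1 (wmax n u))
    (hv_img : v '' Set.Icc 1 n = Set.Icc 1 (wmax n v)) :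
    matSize (toMat n u v) = n := by
  rw [matSize]
  have hinner : ∀ i : Fin (wmax n u), ∑ j, toMat n u v i j
      = ∑ j ∈ Finset.Icc 1 (wmax n v), (fib n u v ((i:ℕ)+1) j).card := by
    intro i
    exact sum_fin_icc (wmax n v) (fun j => (fib n u v ((i:ℕ)+1) j).card)
  rw [Finset.sum_congr rfl fun i _ => hinner i,
    sum_fin_icc (wmax n u) (fun i => ∑ j ∈ Finset.Icc 1 (wmax n v), (fib n u v i j).card)]
  exact size_fib u v _ _ (img_mem hu_img).1 (img_mem hv_img).1

lemma F_mem_binary {n : ℕ} (hn : 1 ≤ n) {u v : ℕ → ℕ} (h : (u, v) ∈ BBurPairs n) :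
    FF n (u, v) ∈ BinaryBurgeMatrices n := by
  obtain ⟨⟨⟨huw, ku, hkimg⟩, humono⟩, ⟨hvw, kv, hvimg⟩, hdes⟩ := h
  have hP : wmax n u = ku := wmax_eq hkimg hn
  have hQ : wmax n v = kv := wmax_eq hvimg hn
  have hu_img : u '' Set.Icc 1 n = Set.Icc 1 (wmax n u) := by rw [hP]; exact hkimg
  have hv_img : v '' Set.Icc 1 n = Set.Icc 1 (wmax n v) := by rw [hQ]; exact hvimg
  refine ⟨⟨⟨?_, ?_⟩, ?_⟩, ?_⟩
  · -- rows
    show ∀ i : Fin (wmax n u), ∃ j : Fin (wmax n v), toMat n u v i j ≠ 0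
    intro i
    have hi : (i:ℕ)+1 ∈ Finset.Icc 1 (wmax n u) := by
      rw [Finset.mem_Icc]; exact ⟨by omega, by omega⟩
    obtain ⟨t, ht, hut⟩ := (img_mem hu_img).2 _ hi
    have hvt := (img_mem hv_img).1 t ht
    rw [Finset.mem_Icc] at hvt
    refine ⟨⟨v t - 1, by omega⟩, ?_⟩
    show (fib n u v ((i:ℕ)+1) (v t - 1 + 1)).card ≠ 0
    exact Finset.card_ne_zero_of_mem (Finset.mem_filter.mpr ⟨ht, hut, by omega⟩)
  · -- cols
    show ∀ j : Fin (wmax n v), ∃ i : Fin (wmax n u), toMat n u v i j ≠ 0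
    intro j
    have hj : (j:ℕ)+1 ∈ Finset.Icc 1 (wmax n v) := by
      rw [Finset.mem_Icc]; exact ⟨by omega, by omega⟩
    obtain ⟨t, ht, hvt⟩ := (img_mem hv_img).2 _ hj
    have hut := (img_mem hu_img).1 t ht
    rw [Finset.mem_Icc] at hut
    refine ⟨⟨u t - 1, by omega⟩, ?_⟩
    show (fib n u v (u t - 1 + 1) ((j:ℕ)+1)).card ≠ 0
    exact Finset.card_ne_zero_of_mem (Finset.mem_filter.mpr ⟨ht, by omega, hvt⟩)
  · exact matSize_toMat hu_img hv_img
  · show ∀ (i : Fin (wmax n u)) (j : Fin (wmax n v)), toMat n u v i j ≤ 1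
    intro i j
    exact fib_card_le_one humono hdes _ _

lemma F_injOn {n : ℕ} (hn : 1 ≤ n) : Set.InjOn (FF n) (BBurPairs n) := by
  rintro ⟨u, v⟩ h ⟨u', v'⟩ h' heq
  obtain ⟨⟨⟨huw, ku, hkimg⟩, humono⟩, ⟨hvw, kv, hvimg⟩, hdes⟩ := h
  obtain ⟨⟨⟨huw', ku', hkimg'⟩, humono'⟩, ⟨hvw', kv', hvimg'⟩, hdes'⟩ := h'
  simp only at huw humono hkimg hvw hvimg hdes huw' humono' hkimg' hvw' hvimg' hdes'
  have hu_img : u '' Set.Icc 1 n = Set.Icc 1 (wmax n u) := by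
    rw [wmax_eq hkimg hn]; exact hkimg
  have hv_img : v '' Set.Icc 1 n = Set.Icc 1 (wmax n v) := by
    rw [wmax_eq hvimg hn]; exact hvimg
  have hu_img' : u' '' Set.Icc 1 n = Set.Icc 1 (wmax n u') := by
    rw [wmax_eq hkimg' hn]; exact hkimg'
  have hv_img' : v' '' Set.Icc 1 n = Set.Icc 1 (wmax n v') := by
    rw [wmax_eq hvimg' hn]; exact hvimg'
  have hext := sigma_eq_extM heq
  have hfib : ∀ i j, (fib n u v i j).card = (fib n u' v' i j).card := by
    intro i j
    rw [← extM_toMat hu_img hv_img i j, ← extM_toMat hu_img' hv_img' i j]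
    rw [show extM (toMat n u v) = extM (toMat n u' v') from hext]
  set Q := max (wmax n v) (wmax n v') with hQdef
  have hvQ : ∀ t ∈ Finset.Icc 1 n, v t ∈ Finset.Icc 1 Q := by
    intro t ht
    have := (img_mem hv_img).1 t ht
    rw [Finset.mem_Icc] at this ⊢
    omega
  have hvQ' : ∀ t ∈ Finset.Icc 1 n, v' t ∈ Finset.Icc 1 Q := by
    intro t ht
    have := (img_mem hv_img').1 t ht
    rw [Finset.mem_Icc] at this ⊢
    omega
  have hcount : ∀ i, ((Finset.Icc 1 n).filter fun t => u t = i).card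
      = ((Finset.Icc 1 n).filter fun t => u' t = i).card := by
    intro i
    rw [← rowsum_fib u v i Q hvQ, ← rowsum_fib u' v' i Q hvQ']
    exact Finset.sum_congr rfl fun j _ => hfib i j
  have hu_eq : ∀ t ∈ Finset.Icc 1 n, u t = u' t := mono_eq_of_counts humono humono' hcount
  have huu' : u = u' := by
    funext t
    by_cases ht : t ∈ Set.Icc 1 n
    · exact hu_eq t (Finset.mem_Icc.mpr ⟨ht.1, ht.2⟩)
    · rw [huw t ht, huw' t ht]
  have hvv' : ∀ t ∈ Finset.Icc 1 n, v t = v' t := by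
    intro t htn
    set i := u t with hidef
    set S := (Finset.Icc 1 n).filter fun s => u s = i with hSdef
    have htS : t ∈ S := Finset.mem_filter.mpr ⟨htn, rfl⟩
    have hanti : ∀ a ∈ S, ∀ b ∈ S, a < b → v b < v a := by
      intro a ha b hb hab
      rw [hSdef, Finset.mem_filter, Finset.mem_Icc] at ha hb
      exact blockStrictAnti humono hdes a b ha.1.1 hab hb.1.2 (by omega)
    have hanti' : ∀ a ∈ S, ∀ b ∈ S, a < b → v' b < v' a := by
      intro a ha b hb hab
      rw [hSdef, Finset.mem_filter, Finset.mem_Icc] at ha hb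
      refine blockStrictAnti humono' hdes' a b ha.1.1 hab hb.1.2 ?_
      rw [← hu_eq a (Finset.mem_Icc.mpr ha.1), ← hu_eq b (Finset.mem_Icc.mpr hb.1)]
      omega
    have himg : S.image v = S.image v' := by
      ext j
      have e1 : (j ∈ S.image v) ↔ (fib n u v i j).Nonempty := by
        rw [Finset.mem_image]
        constructor
        · rintro ⟨a, ha, rfl⟩
          obtain ⟨ha1, ha2⟩ := Finset.mem_filter.mp ha
          exact ⟨a, Finset.mem_filter.mpr ⟨ha1, ha2, rfl⟩⟩
        · rintro ⟨a, ha⟩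
          obtain ⟨ha1, ha2, ha3⟩ := Finset.mem_filter.mp ha
          exact ⟨a, Finset.mem_filter.mpr ⟨ha1, ha2⟩, ha3⟩
      have e2 : (j ∈ S.image v') ↔ (fib n u' v' i j).Nonempty := by
        rw [Finset.mem_image]
        constructor
        · rintro ⟨a, ha, rfl⟩
          obtain ⟨ha1, ha2⟩ := Finset.mem_filter.mp ha
          exact ⟨a, Finset.mem_filter.mpr ⟨ha1, by rw [← hu_eq a ha1]; exact ha2, rfl⟩⟩
        · rintro ⟨a, ha⟩
          obtain ⟨ha1, ha2, ha3⟩ := Finset.mem_filter.mp ha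
          exact ⟨a, Finset.mem_filter.mpr ⟨ha1, by rw [hu_eq a ha1]; exact ha2⟩, ha3⟩
      rw [e1, e2, ← Finset.card_pos, ← Finset.card_pos, hfib i j]
    exact strictAntiOn_eq_of_image_eq S v v' hanti hanti' himg t htS
  have hvv'' : v = v' := by
    funext t
    by_cases ht : t ∈ Set.Icc 1 n
    · exact hvv' t (Finset.mem_Icc.mpr ⟨ht.1, ht.2⟩)
    · rw [hvw t ht, hvw' t ht]
  rw [Prod.mk.injEq]
  exact ⟨huu', hvv''⟩

/-! ### Inverse construction -/

def rowR {p q : ℕ} (M : Matrix (Fin p) (Fin q) ℕ) (i : ℕ) : ℕ :=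
  ∑ j ∈ Finset.Icc 1 q, extM M i j

def cums {p q : ℕ} (M : Matrix (Fin p) (Fin q) ℕ) (i : ℕ) : ℕ :=
  ∑ i' ∈ Finset.Icc 1 (min i p), rowR M i'

def colSet {p q : ℕ} (M : Matrix (Fin p) (Fin q) ℕ) (i : ℕ) : Finset ℕ :=
  (Finset.Icc 1 q).filter fun j => extM M i j ≠ 0

noncomputable def uOf {p q : ℕ} (M : Matrix (Fin p) (Fin q) ℕ) (t : ℕ) : ℕ :=
  haveI := Classical.dec (1 ≤ t ∧ ∃ i, t ≤ cums M i)
  if h : 1 ≤ t ∧ ∃ i, t ≤ cums M i then Nat.find h.2 else 0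

noncomputable def vOf {p q : ℕ} (M : Matrix (Fin p) (Fin q) ℕ) (t : ℕ) : ℕ :=
  ((colSet M (uOf M t)).sort (· ≤ ·)).getD (cums M (uOf M t) - t) 0

lemma cums_zero {p q : ℕ} (M : Matrix (Fin p) (Fin q) ℕ) : cums M 0 = 0 := by
  rw [cums]
  simp

lemma cums_mono {p q : ℕ} (M : Matrix (Fin p) (Fin q) ℕ) : Monotone (cums M) := by
  intro a b hab
  apply Finset.sum_le_sum_of_subset
  apply Finset.Icc_subset_Icc_right
  omega

lemma cums_top {p q : ℕ} (M : Matrix (Fin p) (Fin q) ℕ) : cums M p = matSize M := by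
  rw [cums, matSize, min_self]
  rw [← sum_fin_icc p (rowR M)]
  apply Finset.sum_congr rfl
  intro i _
  rw [rowR, ← sum_fin_icc q (fun j => extM M ((i:ℕ)+1) j)]
  exact Finset.sum_congr rfl fun j _ => extM_apply M i j

lemma cums_le {p q : ℕ} (M : Matrix (Fin p) (Fin q) ℕ) (i : ℕ) : cums M i ≤ matSize M := by
  rw [← cums_top]
  apply Finset.sum_le_sum_of_subset
  apply Finset.Icc_subset_Icc_right
  omega

lemma cums_step {p q : ℕ} (M : Matrix (Fin p) (Fin q) ℕ) {i : ℕ} (h1 : 1 ≤ i) (h2 : i ≤ p) :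
    cums M i = cums M (i-1) + rowR M i := by
  have e1 : min i p = i := by omega
  have e2 : min (i-1) p = i - 1 := by omega
  rw [cums, cums, e1, e2]
  obtain ⟨i', rfl⟩ : ∃ i', i = i' + 1 := ⟨i - 1, by omega⟩
  rw [Finset.sum_Icc_succ_top (by omega)]
  simp

lemma rowR_pos {p q : ℕ} {M : Matrix (Fin p) (Fin q) ℕ} (hB : IsBurge M) {i : ℕ}
    (h1 : 1 ≤ i) (h2 : i ≤ p) : 1 ≤ rowR M i := by
  obtain ⟨j0, hj0⟩ := hB.1 ⟨i - 1, by omega⟩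
  have he : extM M i ((j0:ℕ)+1) ≠ 0 := by
    have : (⟨i - 1 + 1 - 1, by omega⟩ : Fin p) = ⟨i - 1, by omega⟩ := rfl
    rw [show i = (i-1) + 1 by omega]
    rw [show ((i:ℕ)-1) + 1 = ((⟨i-1, by omega⟩ : Fin p) : ℕ) + 1 from rfl]
    rw [extM_apply M ⟨i-1, by omega⟩ j0]
    exact hj0
  calc 1 ≤ extM M i ((j0:ℕ)+1) := by omega
  _ ≤ rowR M i := by
      apply Finset.single_le_sum (f := fun j => extM M i j) (fun _ _ => Nat.zero_le _)
      rw [Finset.mem_Icc]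
      exact ⟨by omega, by omega⟩

lemma colSet_card {p q : ℕ} {M : Matrix (Fin p) (Fin q) ℕ} (hbin : ∀ i j, M i j ≤ 1) (i : ℕ) :
    (colSet M i).card = rowR M i := by
  rw [colSet, rowR, Finset.card_filter]
  apply Finset.sum_congr rfl
  intro j _
  have hle : extM M i j ≤ 1 := by
    rw [extM]
    split_ifs with h
    · exact hbin _ _
    · omega
  split_ifs with h <;> omega

lemma colSet_zero {p q : ℕ} (M : Matrix (Fin p) (Fin q) ℕ) : colSet M 0 = ∅ := by
  rw [colSet, Finset.filter_eq_empty_iff]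
  intro j _
  rw [extM]
  split_ifs with h
  · omega
  · simp

lemma uOf_le_iff {p q : ℕ} (M : Matrix (Fin p) (Fin q) ℕ) {t : ℕ}
    (ht1 : 1 ≤ t) (ht2 : t ≤ matSize M) (i : ℕ) :
    uOf M t ≤ i ↔ t ≤ cums M i := by
  have hex : ∃ i', t ≤ cums M i' := ⟨p, by rw [cums_top]; exact ht2⟩
  have h : 1 ≤ t ∧ ∃ i', t ≤ cums M i' := ⟨ht1, hex⟩
  simp only [uOf]
  rw [dif_pos h, Nat.find_le_iff]
  constructor
  · rintro ⟨m, hm, hmc⟩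
    exact le_trans hmc (cums_mono M hm)
  · intro hi
    exact ⟨i, le_refl i, hi⟩

lemma uOf_block {p q : ℕ} (M : Matrix (Fin p) (Fin q) ℕ) {t : ℕ}
    (ht1 : 1 ≤ t) (ht2 : t ≤ matSize M) {i : ℕ} (hi : 1 ≤ i) :
    uOf M t = i ↔ cums M (i-1) < t ∧ t ≤ cums M i := by
  have h1 := uOf_le_iff M ht1 ht2 i
  have h2 := uOf_le_iff M ht1 ht2 (i-1)
  constructor
  · intro h
    refine ⟨?_, h1.mp (le_of_eq h)⟩
    by_contra hc
    have := h2.mpr (by omega)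
    omega
  · rintro ⟨ha, hb⟩
    have := h1.mpr hb
    have : ¬ (uOf M t ≤ i - 1) := fun hc => by have := h2.mp hc; omega
    omega

lemma uOf_range {p q : ℕ} (M : Matrix (Fin p) (Fin q) ℕ) {t : ℕ}
    (ht1 : 1 ≤ t) (ht2 : t ≤ matSize M) :
    1 ≤ uOf M t ∧ uOf M t ≤ p := by
  constructor
  · by_contra hc
    have := (uOf_le_iff M ht1 ht2 0).mp (by omega)
    rw [cums_zero] at this
    omega
  · exact (uOf_le_iff M ht1 ht2 p).mpr (by rw [cums_top]; exact ht2)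

lemma uOf_word {p q : ℕ} (M : Matrix (Fin p) (Fin q) ℕ) {t : ℕ}
    (ht : ¬ (1 ≤ t ∧ t ≤ matSize M)) : uOf M t = 0 := by
  simp only [uOf]
  rw [dif_neg]
  rintro ⟨h1, i, hi⟩
  exact ht ⟨h1, le_trans hi (cums_le M i)⟩

lemma uOf_mono {p q : ℕ} (M : Matrix (Fin p) (Fin q) ℕ) :
    MonotoneOn (uOf M) (Set.Icc 1 (matSize M)) := by
  rintro s ⟨hs1, hs2⟩ t ⟨ht1, ht2⟩ hst
  have := (uOf_le_iff M ht1 ht2 (uOf M t)).mp (le_refl _)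
  exact (uOf_le_iff M hs1 hs2 (uOf M t)).mpr (by omega)

lemma cums_lt {p q : ℕ} {M : Matrix (Fin p) (Fin q) ℕ} (hB : IsBurge M) {i : ℕ}
    (h1 : 1 ≤ i) (h2 : i ≤ p) : cums M (i-1) < cums M i := by
  have := cums_step M h1 h2
  have := rowR_pos hB h1 h2
  omega

lemma uOf_surj {p q : ℕ} {M : Matrix (Fin p) (Fin q) ℕ} (hB : IsBurge M) {i : ℕ}
    (h1 : 1 ≤ i) (h2 : i ≤ p) : uOf M (cums M i) = i ∧ cums M i ∈ Finset.Icc 1 (matSize M) := by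
  have hlt := cums_lt hB h1 h2
  have hle := cums_le M i
  have ht1 : 1 ≤ cums M i := by omega
  refine ⟨?_, Finset.mem_Icc.mpr ⟨ht1, hle⟩⟩
  rw [uOf_block M ht1 hle h1]
  omega

lemma uOf_blockIcc {p q : ℕ} (M : Matrix (Fin p) (Fin q) ℕ) {i : ℕ} (hi : 1 ≤ i) :
    (Finset.Icc 1 (matSize M)).filter (fun t => uOf M t = i)
      = Finset.Icc (cums M (i-1) + 1) (cums M i) := by
  ext t
  rw [Finset.mem_filter, Finset.mem_Icc, Finset.mem_Icc]
  constructor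
  · rintro ⟨⟨ht1, ht2⟩, hu⟩
    have := (uOf_block M ht1 ht2 hi).mp hu
    omega
  · rintro ⟨ha, hb⟩
    have h0 : cums M (i-1) ≥ 0 := Nat.zero_le _
    have ht1 : 1 ≤ t := by omega
    have ht2 : t ≤ matSize M := le_trans hb (cums_le M i)
    exact ⟨⟨ht1, ht2⟩, (uOf_block M ht1 ht2 hi).mpr ⟨by omega, hb⟩⟩

lemma uOf_img {p q : ℕ} {M : Matrix (Fin p) (Fin q) ℕ} (hB : IsBurge M) :
    uOf M '' Set.Icc 1 (matSize M) = Set.Icc 1 p := by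
  ext i
  constructor
  · rintro ⟨t, ⟨ht1, ht2⟩, rfl⟩
    exact uOf_range M ht1 ht2
  · rintro ⟨h1, h2⟩
    obtain ⟨he, hmem⟩ := uOf_surj hB h1 h2
    rw [Finset.mem_Icc] at hmem
    exact ⟨cums M i, ⟨hmem.1, hmem.2⟩, he⟩

lemma sorted_getElem_lt {l : List ℕ} (hs : l.SortedLT) {a b : ℕ}
    (ha : a < l.length) (hb : b < l.length) (hab : a < b) : l[a] < l[b] := by
  exact hs.strictMono_get (show (⟨a, ha⟩ : Fin l.length) < ⟨b, hb⟩ from hab)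

lemma vOf_spec {p q : ℕ} {M : Matrix (Fin p) (Fin q) ℕ} (hB : IsBurge M)
    (hbin : ∀ i j, M i j ≤ 1) {t : ℕ} (ht1 : 1 ≤ t) (ht2 : t ≤ matSize M) :
    ∃ h : cums M (uOf M t) - t < ((colSet M (uOf M t)).sort (· ≤ ·)).length,
      vOf M t = ((colSet M (uOf M t)).sort (· ≤ ·))[cums M (uOf M t) - t]'h := by
  obtain ⟨hi1, hip⟩ := uOf_range M ht1 ht2
  have hblk := (uOf_block M ht1 ht2 hi1).mp rfl
  have hstep := cums_step M hi1 hip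
  have hlen : ((colSet M (uOf M t)).sort (· ≤ ·)).length = rowR M (uOf M t) := by
    rw [Finset.length_sort, colSet_card hbin]
  have hk : cums M (uOf M t) - t < ((colSet M (uOf M t)).sort (· ≤ ·)).length := by
    rw [hlen]; omega
  exact ⟨hk, List.getD_eq_getElem _ _ hk⟩

lemma vOf_mem {p q : ℕ} {M : Matrix (Fin p) (Fin q) ℕ} (hB : IsBurge M)
    (hbin : ∀ i j, M i j ≤ 1) {t : ℕ} (ht1 : 1 ≤ t) (ht2 : t ≤ matSize M) :
    vOf M t ∈ colSet M (uOf M t) := by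
  obtain ⟨hk, he⟩ := vOf_spec hB hbin ht1 ht2
  rw [he, ← Finset.mem_sort (· ≤ ·)]
  exact List.getElem_mem _

lemma vOf_anti {p q : ℕ} {M : Matrix (Fin p) (Fin q) ℕ} (hB : IsBurge M)
    (hbin : ∀ i j, M i j ≤ 1) {s t : ℕ} (hs1 : 1 ≤ s) (hst : s < t)
    (ht2 : t ≤ matSize M) (hust : uOf M s = uOf M t) : vOf M t < vOf M s := by
    obtain ⟨hks, hes⟩ := vOf_spec hB hbin hs1 (by omega)
    obtain ⟨hkt, het⟩ := vOf_spec hB hbin (by omega) ht2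
    rw [hes, het]
    have hsorted := Finset.sortedLT_sort (colSet M (uOf M t))
    have hidx : cums M (uOf M t) - t < cums M (uOf M t) - s := by
      obtain ⟨hi1, hip⟩ := uOf_range M hs1 (by omega : s ≤ matSize M)
      have hblk := (uOf_block M hs1 (by omega) hi1).mp rfl
      rw [hust] at hblk
      have hblkt := (uOf_block M (by omega : (1:ℕ) ≤ t) ht2 (by rw [← hust]; exact hi1)).mp rfl
      omega
    simp only [hust]
    have hks' : cums M (uOf M t) - s < ((colSet M (uOf M t)).sort (· ≤ ·)).length := by
      rw [← hust]; exact hks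
    exact sorted_getElem_lt hsorted _ hks' hidx

lemma vOf_surj_block {p q : ℕ} {M : Matrix (Fin p) (Fin q) ℕ} (hB : IsBurge M)
    (hbin : ∀ i j, M i j ≤ 1) {i : ℕ} (hi1 : 1 ≤ i) (hip : i ≤ p) {j : ℕ}
    (hj : j ∈ colSet M i) :
    ∃ t, 1 ≤ t ∧ t ≤ matSize M ∧ uOf M t = i ∧ vOf M t = j := by
  obtain ⟨k, hk, hLk⟩ := List.mem_iff_getElem.mp ((Finset.mem_sort (· ≤ ·)).mpr hj)
  rw [Finset.length_sort, colSet_card hbin] at hk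
  have hstep := cums_step M hi1 hip
  have hle := cums_le M i
  set t := cums M i - k with htdef
  have ht1 : 1 ≤ t := by omega
  have ht2 : t ≤ matSize M := by omega
  have hui : uOf M t = i := by
    rw [uOf_block M ht1 ht2 hi1]
    omega
  refine ⟨t, ht1, ht2, hui, ?_⟩
  obtain ⟨hkk, he⟩ := vOf_spec hB hbin ht1 ht2
  rw [he]
  simp only [hui]
  have hidx : cums M i - t = k := by omega
  simp only [hidx]
  exact hLk

lemma extM_le_one {p q : ℕ} {M : Matrix (Fin p) (Fin q) ℕ}
    (hbin : ∀ i j, M i j ≤ 1) (i j : ℕ) : extM M i j ≤ 1 := by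
  rw [extM]
  split_ifs with h
  · exact hbin _ _
  · omega

lemma extM_mem_colSet {p q : ℕ} {M : Matrix (Fin p) (Fin q) ℕ} {i j : ℕ}
    (h : extM M i j ≠ 0) : j ∈ colSet M i := by
  have hcond : 1 ≤ i ∧ i ≤ p ∧ 1 ≤ j ∧ j ≤ q := by
    by_contra hc
    rw [extM, dif_neg hc] at h
    exact h rfl
  exact Finset.mem_filter.mpr ⟨Finset.mem_Icc.mpr ⟨hcond.2.2.1, hcond.2.2.2⟩, h⟩

lemma fib_uv {p q : ℕ} {M : Matrix (Fin p) (Fin q) ℕ} (hB : IsBurge M)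
    (hbin : ∀ i j, M i j ≤ 1) {i : ℕ} (j : ℕ) (hi1 : 1 ≤ i) (hip : i ≤ p) :
    (fib (matSize M) (uOf M) (vOf M) i j).card = extM M i j := by
  by_cases hj : j ∈ colSet M i
  · have hne : extM M i j ≠ 0 := (Finset.mem_filter.mp hj).2
    have h1 : extM M i j = 1 := by have := extM_le_one hbin i j; omega
    rw [h1, Finset.card_eq_one]
    obtain ⟨t0, ht01, ht02, ht0u, ht0v⟩ := vOf_surj_block hB hbin hi1 hip hj
    refine ⟨t0, ?_⟩
    ext a
    rw [fib, Finset.mem_filter, Finset.mem_Icc, Finset.mem_singleton]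
    constructor
    · rintro ⟨⟨ha1, ha2⟩, hau, hav⟩
      by_contra hne'
      rcases lt_or_gt_of_ne hne' with hlt | hlt
      · have := vOf_anti hB hbin ha1 hlt ht02 (by rw [hau, ht0u])
        omega
      · have := vOf_anti hB hbin ht01 hlt ha2 (by rw [hau, ht0u])
        omega
    · rintro rfl
      exact ⟨⟨ht01, ht02⟩, ht0u, ht0v⟩
  · have h0 : extM M i j = 0 := by
      by_contra h
      exact hj (extM_mem_colSet h)
    rw [h0, Finset.card_eq_zero, fib, Finset.filter_eq_empty_iff]
    rintro a ha ⟨hau, hav⟩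
    rw [Finset.mem_Icc] at ha
    have := vOf_mem hB hbin ha.1 ha.2
    rw [hau, hav] at this
    exact hj this

lemma vOf_word {p q : ℕ} (M : Matrix (Fin p) (Fin q) ℕ) {t : ℕ}
    (ht : ¬ (1 ≤ t ∧ t ≤ matSize M)) : vOf M t = 0 := by
  rw [vOf, uOf_word M ht, colSet_zero]
  simp

lemma vOf_img {p q : ℕ} {M : Matrix (Fin p) (Fin q) ℕ} (hB : IsBurge M)
    (hbin : ∀ i j, M i j ≤ 1) :
    vOf M '' Set.Icc 1 (matSize M) = Set.Icc 1 q := by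
  ext j
  constructor
  · rintro ⟨t, ⟨ht1, ht2⟩, rfl⟩
    have := vOf_mem hB hbin ht1 ht2
    have := Finset.mem_Icc.mp (Finset.mem_filter.mp this).1
    exact ⟨this.1, this.2⟩
  · rintro ⟨hj1, hj2⟩
    obtain ⟨i0, hi0⟩ := hB.2 ⟨j - 1, by omega⟩
    have hne : extM M ((i0:ℕ)+1) j ≠ 0 := by
      rw [show j = ((⟨j-1, by omega⟩ : Fin q) : ℕ) + 1 by simp; omega]
      rw [extM_apply M i0 ⟨j-1, by omega⟩]
      exact hi0
    have hj : j ∈ colSet M ((i0:ℕ)+1) := extM_mem_colSet hne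
    obtain ⟨t, ht1, ht2, _, htv⟩ :=
      vOf_surj_block hB hbin (by omega) (by omega : (i0:ℕ)+1 ≤ p) hj
    exact ⟨t, ⟨ht1, ht2⟩, htv⟩

lemma F_surj_aux {p q : ℕ} {M : Matrix (Fin p) (Fin q) ℕ} (hB : IsBurge M)
    (hbin : ∀ i j, M i j ≤ 1) (hn : 1 ≤ matSize M) :
    (uOf M, vOf M) ∈ BBurPairs (matSize M)
    ∧ FF (matSize M) (uOf M, vOf M)
        = (⟨p, ⟨q, M⟩⟩ : Σ a : ℕ, Σ b : ℕ, Matrix (Fin a) (Fin b) ℕ) := by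
  set n := matSize M with hndef
  have hu_img := uOf_img hB
  have hv_img := vOf_img hB hbin
  have huword : IsWord n (uOf M) := by
    intro t ht
    exact uOf_word M (by rw [Set.mem_Icc] at ht; exact ht)
  have hvword : IsWord n (vOf M) := by
    intro t ht
    exact vOf_word M (by rw [Set.mem_Icc] at ht; exact ht)
  have hmono := uOf_mono M
  have hdes : desSet n (uOf M) ⊆ sdesSet n (vOf M) := by
    intro i hi
    rw [desSet, Finset.mem_filter, Finset.mem_Icc] at hi
    obtain ⟨⟨hi1, hi2⟩, hile⟩ := hi
    have hmem1 : i ∈ Set.Icc 1 n := ⟨hi1, by omega⟩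
    have hmem2 : i + 1 ∈ Set.Icc 1 n := ⟨by omega, by omega⟩
    have hle2 := hmono hmem1 hmem2 (by omega)
    have heq : uOf M i = uOf M (i+1) := by omega
    have := vOf_anti hB hbin hi1 (by omega : i < i + 1) (by omega : i + 1 ≤ n) heq
    rw [sdesSet, Finset.mem_filter, Finset.mem_Icc]
    exact ⟨⟨hi1, hi2⟩, this⟩
  have hmem : (uOf M, vOf M) ∈ BBurPairs n :=
    ⟨⟨⟨huword, p, hu_img⟩, hmono⟩, ⟨hvword, q, hv_img⟩, hdes⟩
  refine ⟨hmem, ?_⟩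
  have hp : wmax n (uOf M) = p := wmax_eq hu_img hn
  have hq : wmax n (vOf M) = q := wmax_eq hv_img hn
  refine sigma_eq_of_extM hp hq ?_
  funext i j
  rw [extM_toMat (by rw [hp]; exact hu_img) (by rw [hq]; exact hv_img)]
  by_cases hi : 1 ≤ i ∧ i ≤ p
  · exact fib_uv hB hbin j hi.1 hi.2
  · have h0 : extM M i j = 0 := by
      rw [extM, dif_neg]
      intro hc
      exact hi ⟨hc.1, hc.2.1⟩
    rw [h0, Finset.card_eq_zero, fib, Finset.filter_eq_empty_iff]
    intro t ht hc
    rw [Finset.mem_Icc] at ht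
    have h5 := uOf_range M ht.1 ht.2
    simp only at hc
    rw [hc.1] at h5
    exact hi h5

lemma F_bijOn {n : ℕ} (hn : 1 ≤ n) :
    Set.BijOn (FF n) (BBurPairs n) (BinaryBurgeMatrices n) := by
  refine ⟨?_, F_injOn hn, ?_⟩
  · rintro ⟨u, v⟩ h
    exact F_mem_binary hn h
  · rintro ⟨p, q, A⟩ ⟨⟨hB, hsize⟩, hbin⟩
    have hbin' : ∀ (i : Fin p) (j : Fin q), A i j ≤ 1 := hbin
    subst hsize
    obtain ⟨hmem, heq⟩ := F_surj_aux hB hbin' hn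
    exact ⟨(uOf A, vOf A), hmem, heq⟩

lemma sdes_subset_des (n : ℕ) (v : ℕ → ℕ) : sdesSet n v ⊆ desSet n v := by
  intro i hi
  rw [sdesSet, Finset.mem_filter] at hi
  rw [desSet, Finset.mem_filter]
  exact ⟨hi.1, le_of_lt hi.2⟩

lemma perm_sub_BBur {n : ℕ} : PBurPairs n ⊆ BBurPairs n := by
  rintro ⟨u, v⟩ ⟨hu, ⟨hvw, hvbij⟩, hdes⟩
  refine ⟨hu, ⟨hvw, n, hvbij.image_eq⟩, ?_⟩
  intro i hi
  have hid := hdes hi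
  rw [desSet, Finset.mem_filter, Finset.mem_Icc] at hi hid
  rw [sdesSet, Finset.mem_filter, Finset.mem_Icc]
  refine ⟨hi.1, lt_of_le_of_ne hid.2 ?_⟩
  intro hc
  have h1 : (i : ℕ) ∈ Set.Icc 1 n := ⟨hi.1.1, by omega⟩
  have h2 : (i+1 : ℕ) ∈ Set.Icc 1 n := ⟨by omega, by omega⟩
  have := hvbij.injOn h2 h1 hc
  omega

lemma BBur_perm_mem {n : ℕ} {u v : ℕ → ℕ} (h : (u, v) ∈ BBurPairs n)
    (hp : IsPermWord n v) : (u, v) ∈ PBurPairs n :=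
  ⟨h.1, hp, fun i hi => sdes_subset_des n v (h.2.2 hi)⟩

/-- Column sums of `toMat` are all `1` iff `v` is a permutation word. -/
lemma colsum_iff_perm {n : ℕ} (hn : 1 ≤ n) {u v : ℕ → ℕ} (h : (u, v) ∈ BBurPairs n) :
    (∀ j : Fin (wmax n v), ∑ i, toMat n u v i j = 1) ↔ IsPermWord n v := by
  obtain ⟨⟨⟨huw, ku, hkimg⟩, humono⟩, ⟨hvw, kv, hvimg⟩, hdes⟩ := h
  simp only at huw humono hkimg hvw hvimg hdes
  have hv_img : v '' Set.Icc 1 n = Set.Icc 1 (wmax n v) := by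
    rw [wmax_eq hvimg hn]; exact hvimg
  have hu_img : u '' Set.Icc 1 n = Set.Icc 1 (wmax n u) := by
    rw [wmax_eq hkimg hn]; exact hkimg
  have hcol : ∀ j : Fin (wmax n v), ∑ i, toMat n u v i j
      = ((Finset.Icc 1 n).filter fun t => v t = (j:ℕ)+1).card := by
    intro j
    have e0 : ∑ i, toMat n u v i j
        = ∑ i : Fin (wmax n u), (fib n u v ((i:ℕ)+1) ((j:ℕ)+1)).card := rfl
    rw [e0, sum_fin_icc (wmax n u) (fun i => (fib n u v i ((j:ℕ)+1)).card)]
    exact colsum_fib u v ((j:ℕ)+1) (wmax n u) (img_mem hu_img).1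
  constructor
  · intro hc
    have hfiber : ∀ j, 1 ≤ j → j ≤ wmax n v →
        ((Finset.Icc 1 n).filter fun t => v t = j).card = 1 := by
      intro j hj1 hj2
      have := hc ⟨j - 1, by omega⟩
      rw [hcol ⟨j - 1, by omega⟩] at this
      simpa [show j - 1 + 1 = j by omega] using this
    have hQn : wmax n v = n := by
      have htot : (Finset.Icc 1 n).card
          = ∑ j ∈ Finset.Icc 1 (wmax n v), ((Finset.Icc 1 n).filter fun t => v t = j).card :=
        Finset.card_eq_sum_card_fiberwise (img_mem hv_img).1
      have hone : ∑ j ∈ Finset.Icc 1 (wmax n v),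
          ((Finset.Icc 1 n).filter fun t => v t = j).card
          = ∑ _j ∈ Finset.Icc 1 (wmax n v), 1 :=
        Finset.sum_congr rfl (fun j hj => by
          rw [Finset.mem_Icc] at hj; exact hfiber j hj.1 hj.2)
      rw [hone] at htot
      simp [Nat.card_Icc] at htot
      omega
    constructor
    · exact hvw
    · refine ⟨?_, ?_, ?_⟩
      · intro t ht
        have := (img_mem hv_img).1 t (Finset.mem_Icc.mpr ⟨ht.1, ht.2⟩)
        rw [Finset.mem_Icc] at this
        exact ⟨this.1, by omega⟩
      · intro s hs t ht hst
        have hv1 := (img_mem hv_img).1 s (Finset.mem_Icc.mpr ⟨hs.1, hs.2⟩)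
        rw [Finset.mem_Icc] at hv1
        have hcard := hfiber (v s) hv1.1 hv1.2
        rw [Finset.card_eq_one] at hcard
        obtain ⟨a, ha⟩ := hcard
        have hsmem : s ∈ (Finset.Icc 1 n).filter fun t => v t = v s :=
          Finset.mem_filter.mpr ⟨Finset.mem_Icc.mpr ⟨hs.1, hs.2⟩, rfl⟩
        have htmem : t ∈ (Finset.Icc 1 n).filter fun t' => v t' = v s :=
          Finset.mem_filter.mpr ⟨Finset.mem_Icc.mpr ⟨ht.1, ht.2⟩, hst.symm⟩
        rw [ha, Finset.mem_singleton] at hsmem htmem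
        rw [hsmem, htmem]
      · intro j hj
        have : j ∈ v '' Set.Icc 1 n := by rw [hv_img, hQn]; exact hj
        exact this
  · intro hperm
    intro j
    rw [hcol j]
    have hQn : wmax n v = n := wmax_eq hperm.2.image_eq hn
    have hj2 : (j:ℕ)+1 ≤ n := by omega
    have : ((j:ℕ)+1) ∈ Set.Icc 1 n := ⟨by omega, hj2⟩
    obtain ⟨t0, ht0, hvt0⟩ := hperm.2.surjOn this
    rw [Finset.card_eq_one]
    refine ⟨t0, ?_⟩
    ext a
    rw [Finset.mem_filter, Finset.mem_Icc, Finset.mem_singleton]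
    constructor
    · rintro ⟨ha, hva⟩
      exact hperm.2.injOn ⟨ha.1, ha.2⟩ ht0 (by rw [hva, hvt0])
    · rintro rfl
      exact ⟨⟨ht0.1, ht0.2⟩, hvt0⟩

lemma burge0_eq {X : Σ p : ℕ, Σ q : ℕ, Matrix (Fin p) (Fin q) ℕ}
    (hX : X ∈ BurgeMatrices 0) :
    X = (⟨0, ⟨0, fun i _ => Fin.elim0 i⟩⟩ : Σ p : ℕ, Σ q : ℕ, Matrix (Fin p) (Fin q) ℕ) := by
  obtain ⟨p, q, A⟩ := X
  obtain ⟨hB, hsize⟩ := hX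
  have hB1 : ∀ i : Fin p, ∃ j : Fin q, A i j ≠ 0 := hB.1
  have hB2 : ∀ j : Fin q, ∃ i : Fin p, A i j ≠ 0 := hB.2
  have hsize' : ∑ i : Fin p, ∑ j : Fin q, A i j = 0 := hsize
  have hzero : ∀ (i : Fin p) (j : Fin q), A i j = 0 := by
    intro i j
    have h1 := Finset.sum_eq_zero_iff.mp hsize' i (Finset.mem_univ i)
    exact Finset.sum_eq_zero_iff.mp h1 j (Finset.mem_univ j)
  have hp : p = 0 := by
    by_contra hp
    obtain ⟨j, hj⟩ := hB1 ⟨0, by omega⟩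
    exact hj (hzero _ j)
  subst hp
  have hq : q = 0 := by
    by_contra hq
    obtain ⟨i, _⟩ := hB2 ⟨0, by omega⟩
    exact Fin.elim0 i
  subst hq
  have : A = fun i _ => Fin.elim0 i := funext fun i => Fin.elim0 i
  rw [this]

lemma pair0_eq {x : (ℕ → ℕ) × (ℕ → ℕ)} (h1 : IsWord 0 x.1) (h2 : IsWord 0 x.2) :
    x = ((fun _ => 0 : ℕ → ℕ), (fun _ => 0 : ℕ → ℕ)) := by
  obtain ⟨u, v⟩ := x
  have hIcc0 : Set.Icc (1:ℕ) 0 = ∅ := Set.Icc_eq_empty (by omega)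
  have hu : u = fun _ => 0 := funext fun t => h1 t (by rw [hIcc0]; exact Set.notMem_empty t)
  have hv : v = fun _ => 0 := funext fun t => h2 t (by rw [hIcc0]; exact Set.notMem_empty t)
  rw [Prod.mk.injEq]
  exact ⟨hu, hv⟩

lemma zero_word_props : IsWI 0 (fun _ => 0) ∧ IsPermWord 0 (fun _ => 0)
    ∧ IsCayley 0 (fun _ => 0) := by
  have hIcc0 : Set.Icc (1:ℕ) 0 = ∅ := Set.Icc_eq_empty (by omega)
  have hword : IsWord 0 (fun _ => 0) := fun i _ => rfl
  have hcay : IsCayley 0 (fun _ => 0) := by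
    refine ⟨hword, 0, ?_⟩
    rw [hIcc0, Set.image_empty]
  refine ⟨⟨hcay, ?_⟩, ⟨hword, ?_⟩, hcay⟩
  · intro a ha
    rw [hIcc0] at ha
    exact absurd ha (Set.notMem_empty a)
  · rw [hIcc0]
    exact ⟨fun a ha => absurd ha (Set.notMem_empty a),
      fun a ha => absurd ha (Set.notMem_empty a),
      fun a ha => absurd ha (Set.notMem_empty a)⟩

lemma des0_sub (u : ℕ → ℕ) (S : Finset ℕ) : desSet 0 u ⊆ S := by
  intro i hi
  have := Finset.mem_Icc.mp (Finset.mem_filter.mp hi).1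
  omega

theorem stmt2' (n : ℕ) :
    Set.ncard (BinaryBurgeMatrices n) = Set.ncard (BBurPairs n) ∧
    Set.ncard (ColSumOneBurgeMatrices n) = Set.ncard (PBurPairs n) := by
  rcases Nat.eq_zero_or_pos n with rfl | hn
  · -- n = 0
    obtain ⟨hWI, hPerm, _⟩ := zero_word_props
    set z : (ℕ → ℕ) × (ℕ → ℕ) := ((fun _ => 0 : ℕ → ℕ), (fun _ => 0 : ℕ → ℕ)) with hz
    set M0 : Σ p : ℕ, Σ q : ℕ, Matrix (Fin p) (Fin q) ℕ :=
      ⟨0, ⟨0, fun i _ => Fin.elim0 i⟩⟩ with hM0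
    have hM0B : M0 ∈ BurgeMatrices 0 := by
      refine ⟨⟨fun i => Fin.elim0 i, fun j => Fin.elim0 j⟩, ?_⟩
      simp [matSize, hM0]
    have e1 : BinaryBurgeMatrices 0 = {M0} := by
      apply Set.eq_singleton_iff_unique_mem.mpr
      exact ⟨⟨hM0B, fun i j => Fin.elim0 i⟩, fun X hX => burge0_eq hX.1⟩
    have e2 : ColSumOneBurgeMatrices 0 = {M0} := by
      apply Set.eq_singleton_iff_unique_mem.mpr
      exact ⟨⟨hM0B, fun j => Fin.elim0 j⟩, fun X hX => burge0_eq hX.1⟩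
    have e3 : BBurPairs 0 = {z} := by
      apply Set.eq_singleton_iff_unique_mem.mpr
      refine ⟨⟨hWI, zero_word_props.2.2, des0_sub _ _⟩, ?_⟩
      rintro ⟨u, v⟩ hx
      exact pair0_eq hx.1.1.1 hx.2.1.1
    have e4 : PBurPairs 0 = {z} := by
      apply Set.eq_singleton_iff_unique_mem.mpr
      refine ⟨⟨hWI, hPerm, des0_sub _ _⟩, ?_⟩
      rintro ⟨u, v⟩ hx
      exact pair0_eq hx.1.1.1 hx.2.1.1
    rw [e1, e2, e3, e4]
    simp
  · -- n ≥ 1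
    have hbij := F_bijOn hn
    have h1 : (BinaryBurgeMatrices n).ncard = (BBurPairs n).ncard := by
      rw [← hbij.image_eq]
      exact Set.ncard_image_of_injOn hbij.injOn
    have hcolsub : ColSumOneBurgeMatrices n ⊆ BinaryBurgeMatrices n := by
      rintro ⟨p, q, A⟩ ⟨hbur, hcol⟩
      refine ⟨hbur, ?_⟩
      show ∀ (i : Fin p) (j : Fin q), A i j ≤ 1
      intro i j
      have hc : ∑ i' : Fin p, A i' j = 1 := hcol j
      calc A i j ≤ ∑ i', A i' j :=
            Finset.single_le_sum (f := fun i' => A i' j)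
              (fun _ _ => Nat.zero_le _) (Finset.mem_univ i)
      _ = 1 := hc
    have hiff : ∀ u v, (u, v) ∈ BBurPairs n →
        (FF n (u, v) ∈ ColSumOneBurgeMatrices n ↔ IsPermWord n v) := by
      intro u v h
      constructor
      · intro hc
        exact (colsum_iff_perm hn h).mp hc.2
      · intro hperm
        exact ⟨(F_mem_binary hn h).1, (colsum_iff_perm hn h).mpr hperm⟩
    have hbij2 : Set.BijOn (FF n) (PBurPairs n) (ColSumOneBurgeMatrices n) := by
      refine ⟨?_, fun x hx y hy => F_injOn hn (perm_sub_BBur hx) (perm_sub_BBur hy), ?_⟩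
      · rintro ⟨u, v⟩ hx
        exact (hiff u v (perm_sub_BBur hx)).mpr hx.2.1
      · intro M hM
        obtain ⟨x, hx, hfx⟩ := hbij.surjOn (hcolsub hM)
        obtain ⟨u, v⟩ := x
        refine ⟨(u, v), ?_, hfx⟩
        have hperm : IsPermWord n v := (hiff u v hx).mp (by rw [hfx]; exact hM)
        exact BBur_perm_mem hx hperm
    have h2 : (ColSumOneBurgeMatrices n).ncard = (PBurPairs n).ncard := by
      rw [← hbij2.image_eq]
      exact Set.ncard_image_of_injOn hbij2.injOn
    exact ⟨h1, h2⟩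

/-- Proposition 3.1: binary Burge matrices of size `n` are equinumerous with
pairs `(u,v) ∈ WI[n] × Cay[n]` with `Des(u) ⊆ Des∘(v)`, and Burge matrices of
size `n` with all column sums `1` are equinumerous with pairs
`(u,v) ∈ WI[n] × S_n` with `Des(u) ⊆ Des(v)`. -/
theorem stmt2 (n : ℕ) :
    Set.ncard (BinaryBurgeMatrices n) = Set.ncard (BBurPairs n) ∧
    Set.ncard (ColSumOneBurgeMatrices n) = Set.ncard (PBurPairs n) := by
  exact stmt2' n

end CayPaper
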